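/- If a topological Markov chain Σ_A admits a φ-conformal probability measure μ (with the conformality identity μ(θ(A)) = ∫_A φ⁻¹ dμ for Borel A on which θ is injective) where φ is a potential of medium variation, then the Gurevič pressure satisfies P_G(θ,φ) ≤ 0; that is, for any state a, limsup_n (1/n)·log ∑_{θⁿx = x, x ∈ [a]} Φ_n(x) ≤ 0. -/

import Mathlib

open MeasureTheory Filter
open scoped ENNReal NNReal

/-- The state space of the topological Markov chain. -/
abbrev Adm {I : Type*} (A : I → I → Prop) := {x : ℕ → I // ∀ n, A (x n) (x (n + 1))}

section Aux
variable {I : Type*} [Countable I] [MeasurableSpace I] [MeasurableSingletonClass I]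
  {A : I → I → Prop}

lemma meas_coord (i : ℕ) : Measurable fun y : Adm A => y.1 i :=
  (measurable_pi_apply i).comp measurable_subtype_coe

lemma meas_cyl (l : ℕ) (q : ℕ → I) :
    MeasurableSet {y : Adm A | ∀ i < l, y.1 i = q i} := by
  have : {y : Adm A | ∀ i < l, y.1 i = q i}
      = ⋂ (i : ℕ) (_ : i < l), (fun y : Adm A => y.1 i) ⁻¹' {q i} := by
    ext y; simp [Set.mem_iInter]
  rw [this]
  exact MeasurableSet.iInter fun i => MeasurableSet.iInter fun _ =>
    (meas_coord i) (measurableSet_singleton _)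

lemma meas_theta (θ : Adm A → Adm A) (hθ : ∀ x n, (θ x).1 n = x.1 (n + 1)) :
    Measurable θ := by
  have h : Measurable fun y : Adm A => ((θ y : Adm A) : ℕ → I) := by
    apply measurable_pi_iff.mpr
    intro n
    simp only [hθ]
    exact meas_coord (n + 1)
  have : θ = fun y => (⟨((θ y : Adm A) : ℕ → I), (θ y).2⟩ : Adm A) := by
    funext y; exact Subtype.ext rfl
  rw [this]
  exact h.subtype_mk

lemma iter_coord (θ : Adm A → Adm A) (hθ : ∀ x n, (θ x).1 n = x.1 (n + 1)) :
    ∀ (k : ℕ) (y : Adm A) (j : ℕ), (θ^[k] y).1 j = y.1 (j + k) := by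
  intro k
  induction k with
  | zero => intro y j; rfl
  | succ k ih =>
    intro y j
    rw [Function.iterate_succ_apply', hθ, ih]
    ring_nf

end Aux

section Cov
set_option linter.unusedSectionVars false
variable {I : Type*} [Countable I] [MeasurableSpace I] [MeasurableSingletonClass I]
  {A : I → I → Prop}

lemma finset_le_lintegral_sum {γ : Type*} (μ : Measure (Adm A)) (s : Finset γ)
    (F : γ → Adm A → ℝ≥0∞) :
    ∑ c ∈ s, ∫⁻ y, F c y ∂μ ≤ ∫⁻ y, ∑ c ∈ s, F c y ∂μ := by
  classical
  induction s using Finset.induction with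
  | empty => simp
  | insert c s h ih =>
    rw [Finset.sum_insert h]
    calc (∫⁻ y, F c y ∂μ) + ∑ b ∈ s, ∫⁻ y, F b y ∂μ
        ≤ (∫⁻ y, F c y ∂μ) + ∫⁻ y, ∑ b ∈ s, F b y ∂μ := by gcongr
      _ ≤ ∫⁻ y, F c y + ∑ b ∈ s, F b y ∂μ := le_lintegral_add _ _
      _ = ∫⁻ y, ∑ b ∈ insert c s, F b y ∂μ := by
          simp only [Finset.sum_insert h]

lemma cov_le (μ : Measure (Adm A)) (φ : Adm A → ℝ)
    (θ : Adm A → Adm A) (hθ : ∀ x n, (θ x).1 n = x.1 (n + 1))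
    (hconf : ∀ S : Set (Adm A), MeasurableSet S → Set.InjOn θ S →
      μ (θ '' S) = ∫⁻ x in S, ENNReal.ofReal (1 / φ x) ∂μ)
    (S : Set (Adm A)) (hS : MeasurableSet S) (hinj : Set.InjOn θ S)
    (f : Adm A → ℝ≥0∞) :
    ∫⁻ z in θ '' S, f z ∂μ ≤ ∫⁻ y in S, f (θ y) * ENNReal.ofReal (1 / φ y) ∂μ := by
  have hθm : Measurable θ := meas_theta θ hθ
  rw [MeasureTheory.lintegral_def]
  refine iSup₂_le fun g hg => ?_
  rw [SimpleFunc.lintegral]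
  have hfiber : ∀ c : ℝ≥0∞, (μ.restrict (θ '' S)) (g ⁻¹' {c})
      = ∫⁻ y in S ∩ θ ⁻¹' (g ⁻¹' {c}), ENNReal.ofReal (1 / φ y) ∂μ := by
    intro c
    rw [Measure.restrict_apply (g.measurableSet_fiber c)]
    have himg : θ '' (S ∩ θ ⁻¹' (g ⁻¹' {c})) = g ⁻¹' {c} ∩ θ '' S := by
      ext z
      constructor
      · rintro ⟨y, ⟨hyS, hyc⟩, rfl⟩
        exact ⟨hyc, ⟨y, hyS, rfl⟩⟩
      · rintro ⟨hzc, ⟨y, hyS, rfl⟩⟩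
        exact ⟨y, ⟨hyS, hzc⟩, rfl⟩
    rw [← himg,
      hconf _ (hS.inter (hθm (g.measurableSet_fiber c))) (hinj.mono Set.inter_subset_left)]
  calc ∑ c ∈ g.range, c * (μ.restrict (θ '' S)) (g ⁻¹' {c})
      ≤ ∑ c ∈ g.range, ∫⁻ y, Set.indicator (S ∩ θ ⁻¹' (g ⁻¹' {c}))
          (fun y => c * ENNReal.ofReal (1 / φ y)) y ∂μ := by
        refine Finset.sum_le_sum fun c _ => ?_
        rw [hfiber c, ← lintegral_indicator (hS.inter (hθm (g.measurableSet_fiber c)))]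
        calc c * ∫⁻ y, Set.indicator (S ∩ θ ⁻¹' (g ⁻¹' {c}))
                (fun y => ENNReal.ofReal (1 / φ y)) y ∂μ
            ≤ ∫⁻ y, c * Set.indicator (S ∩ θ ⁻¹' (g ⁻¹' {c}))
                (fun y => ENNReal.ofReal (1 / φ y)) y ∂μ := lintegral_const_mul_le _ _
          _ = _ := by
              congr 1
              funext y
              by_cases hy : y ∈ S ∩ θ ⁻¹' (g ⁻¹' {c}) <;>
                simp [Set.indicator_of_mem, Set.indicator_of_notMem, hy]
    _ ≤ ∫⁻ y, ∑ c ∈ g.range, Set.indicator (S ∩ θ ⁻¹' (g ⁻¹' {c}))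
          (fun y => c * ENNReal.ofReal (1 / φ y)) y ∂μ := finset_le_lintegral_sum μ _ _
    _ ≤ ∫⁻ y, Set.indicator S (fun y => f (θ y) * ENNReal.ofReal (1 / φ y)) y ∂μ := by
        refine lintegral_mono fun y => ?_
        by_cases hyS : y ∈ S
        · rw [Set.indicator_of_mem hyS]
          rw [Finset.sum_eq_single (g (θ y))]
          · have hmem : y ∈ S ∩ θ ⁻¹' (⇑g ⁻¹' {g (θ y)}) :=
              Set.mem_inter hyS (by exact rfl)
            rw [Set.indicator_of_mem hmem]
            exact mul_le_mul_left (hg (θ y)) _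
          · intro c _ hc
            refine Set.indicator_of_notMem ?_ _
            rintro ⟨-, h2⟩
            exact hc (Set.mem_singleton_iff.mp h2).symm
          · intro hr
            exact absurd (g.mem_range_self (θ y)) hr
        · rw [Set.indicator_of_notMem hyS]
          refine le_of_eq (Finset.sum_eq_zero fun c _ => ?_)
          exact Set.indicator_of_notMem (fun hy => hyS hy.1) _
    _ = ∫⁻ y in S, f (θ y) * ENNReal.ofReal (1 / φ y) ∂μ := lintegral_indicator hS _

end Cov

section Key
set_option linter.unusedSectionVars false
variable {I : Type*} [Countable I] [MeasurableSpace I] [MeasurableSingletonClass I]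
  {A : I → I → Prop}

lemma inj_on_cyl (θ : Adm A → Adm A) (hθ : ∀ x n, (θ x).1 n = x.1 (n + 1))
    (S : Set (Adm A)) (c : I) (hc : ∀ y ∈ S, y.1 0 = c) : Set.InjOn θ S := by
  intro y hy y' hy' h
  refine Subtype.ext (funext fun i => ?_)
  cases i with
  | zero => rw [hc y hy, hc y' hy']
  | succ i =>
    have := congrArg (fun z : Adm A => z.1 i) h
    simpa [hθ] using this

lemma theta_image_cyl (θ : Adm A → Adm A) (hθ : ∀ x n, (θ x).1 n = x.1 (n + 1))
    (p : Adm A) (k l : ℕ) (hl : 1 ≤ l) :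
    θ '' {y : Adm A | ∀ i < l + 1, y.1 i = p.1 (i + k)}
      = {z : Adm A | ∀ i < l, z.1 i = p.1 (i + (k + 1))} := by
  ext z
  constructor
  · rintro ⟨y, hy, rfl⟩ i hi
    rw [hθ, hy (i + 1) (by omega)]
    ring_nf
  · intro hz
    have hadm : ∀ n, A ((fun j => match j with | 0 => p.1 k | (j + 1) => z.1 j) n)
        ((fun j => match j with | 0 => p.1 k | (j + 1) => z.1 j) (n + 1)) := by
      intro n
      cases n with
      | zero =>
        have h0 : z.1 0 = p.1 (k + 1) := by
          have := hz 0 hl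
          simpa using this
        simpa [h0] using p.2 k
      | succ n => exact z.2 n
    refine ⟨⟨fun j => match j with | 0 => p.1 k | (j + 1) => z.1 j, hadm⟩, ?_, ?_⟩
    · intro i hi
      cases i with
      | zero => simpa using rfl
      | succ i =>
        have := hz i (by omega)
        simpa [this] using by ring_nf
    · refine Subtype.ext (funext fun i => ?_)
      rw [hθ]

lemma last_incl (θ : Adm A → Adm A) (hθ : ∀ x n, (θ x).1 n = x.1 (n + 1))
    (p : Adm A) (m : ℕ) (hm : 1 ≤ m) :
    {z : Adm A | z.1 0 = p.1 m}
      ⊆ θ '' {y : Adm A | ∀ i < 1, y.1 i = p.1 (i + (m - 1))} := by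
  intro z hz
  have hadm : ∀ n, A ((fun j => match j with | 0 => p.1 (m - 1) | (j + 1) => z.1 j) n)
      ((fun j => match j with | 0 => p.1 (m - 1) | (j + 1) => z.1 j) (n + 1)) := by
    intro n
    cases n with
    | zero =>
      have h0 : z.1 0 = p.1 m := hz
      have hA := p.2 (m - 1)
      have hm1 : m - 1 + 1 = m := by omega
      rw [hm1] at hA
      simpa [h0] using hA
    | succ n => exact z.2 n
  refine ⟨⟨fun j => match j with | 0 => p.1 (m - 1) | (j + 1) => z.1 j, hadm⟩, ?_, ?_⟩
  · intro i hi
    interval_cases i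
    simpa using rfl
  · refine Subtype.ext (funext fun i => ?_)
    rw [hθ]

end Key

section Ind
set_option linter.unusedSectionVars false
variable {I : Type*} [Countable I] [MeasurableSpace I] [MeasurableSingletonClass I]
  {A : I → I → Prop}

lemma ind_lemma (μ : Measure (Adm A)) (φ : Adm A → ℝ)
    (θ : Adm A → Adm A) (hθ : ∀ x n, (θ x).1 n = x.1 (n + 1))
    (hconf : ∀ S : Set (Adm A), MeasurableSet S → Set.InjOn θ S →
      μ (θ '' S) = ∫⁻ x in S, ENNReal.ofReal (1 / φ x) ∂μ)
    (p : Adm A) (m : ℕ) :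
    ∀ k, k + 1 ≤ m → ∀ f : Adm A → ℝ≥0∞,
      (∫⁻ z in {y : Adm A | ∀ i < m - k, y.1 i = p.1 (i + k)}, f z ∂μ)
        ≤ ∫⁻ y in {y : Adm A | ∀ i < m, y.1 i = p.1 i},
            f (θ^[k] y) * ∏ j ∈ Finset.range k, ENNReal.ofReal (1 / φ (θ^[j] y)) ∂μ := by
  intro k
  induction k with
  | zero =>
    intro _ f
    simp
  | succ k ih =>
    intro hk1 f
    have hk : k + 1 ≤ m := by omega
    have hrw : m - k = (m - (k + 1)) + 1 := by omega
    have himg : {y : Adm A | ∀ i < m - (k + 1), y.1 i = p.1 (i + (k + 1))}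
        = θ '' {y : Adm A | ∀ i < m - k, y.1 i = p.1 (i + k)} := by
      rw [hrw, theta_image_cyl θ hθ p k (m - (k + 1)) (by omega)]
    have hScyl : MeasurableSet {y : Adm A | ∀ i < m - k, y.1 i = p.1 (i + k)} :=
      meas_cyl (m - k) (fun i => p.1 (i + k))
    have hinj : Set.InjOn θ {y : Adm A | ∀ i < m - k, y.1 i = p.1 (i + k)} :=
      inj_on_cyl θ hθ _ (p.1 k) (fun y hy => by simpa using hy 0 (by omega))
    calc (∫⁻ z in {y : Adm A | ∀ i < m - (k + 1), y.1 i = p.1 (i + (k + 1))}, f z ∂μ)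
        = ∫⁻ z in θ '' {y : Adm A | ∀ i < m - k, y.1 i = p.1 (i + k)}, f z ∂μ := by
          rw [himg]
      _ ≤ ∫⁻ y in {y : Adm A | ∀ i < m - k, y.1 i = p.1 (i + k)},
            f (θ y) * ENNReal.ofReal (1 / φ y) ∂μ :=
          cov_le μ φ θ hθ hconf _ hScyl hinj f
      _ ≤ ∫⁻ y in {y : Adm A | ∀ i < m, y.1 i = p.1 i},
            (f (θ (θ^[k] y)) * ENNReal.ofReal (1 / φ (θ^[k] y)))
              * ∏ j ∈ Finset.range k, ENNReal.ofReal (1 / φ (θ^[j] y)) ∂μ :=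
          ih hk (fun y => f (θ y) * ENNReal.ofReal (1 / φ y))
      _ = ∫⁻ y in {y : Adm A | ∀ i < m, y.1 i = p.1 i},
            f (θ^[k + 1] y) * ∏ j ∈ Finset.range (k + 1),
              ENNReal.ofReal (1 / φ (θ^[j] y)) ∂μ := by
          congr 1
          funext y
          rw [Function.iterate_succ_apply', Finset.prod_range_succ]
          ring

end Ind

section KeyMain
set_option linter.unusedSectionVars false
variable {I : Type*} [Countable I] [MeasurableSpace I] [MeasurableSingletonClass I]
  {A : I → I → Prop}

lemma key_lemma (μ : Measure (Adm A)) (φ : Adm A → ℝ) (hφpos : ∀ x, 0 < φ x)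
    (θ : Adm A → Adm A) (hθ : ∀ x n, (θ x).1 n = x.1 (n + 1))
    (hconf : ∀ S : Set (Adm A), MeasurableSet S → Set.InjOn θ S →
      μ (θ '' S) = ∫⁻ x in S, ENNReal.ofReal (1 / φ x) ∂μ)
    (C : ℕ → ℝ)
    (hCvar : ∀ n : ℕ, ∀ x y : Adm A, (∀ i < n, x.1 i = y.1 i) →
      (∏ k ∈ Finset.range n, φ (θ^[k] x)) ≤ C n * ∏ k ∈ Finset.range n, φ (θ^[k] y))
    (p : Adm A) (m : ℕ) (hm : 1 ≤ m) :
    μ {z : Adm A | z.1 0 = p.1 m}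
      ≤ ENNReal.ofReal (C m / ∏ k ∈ Finset.range m, φ (θ^[k] p))
          * μ {y : Adm A | ∀ i < m, y.1 i = p.1 i} := by
  have hScyl : MeasurableSet {y : Adm A | ∀ i < 1, y.1 i = p.1 (i + (m - 1))} :=
    meas_cyl 1 (fun i => p.1 (i + (m - 1)))
  have hinj : Set.InjOn θ {y : Adm A | ∀ i < 1, y.1 i = p.1 (i + (m - 1))} :=
    inj_on_cyl θ hθ _ (p.1 (0 + (m - 1))) (fun y hy => hy 0 (by omega))
  have hPp : 0 < ∏ k ∈ Finset.range m, φ (θ^[k] p) :=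
    Finset.prod_pos fun k _ => hφpos _
  have hC1 : 0 < C m := by
    have := hCvar m p p (fun _ _ => rfl)
    nlinarith
  calc μ {z : Adm A | z.1 0 = p.1 m}
      ≤ μ (θ '' {y : Adm A | ∀ i < 1, y.1 i = p.1 (i + (m - 1))}) :=
        measure_mono (last_incl θ hθ p m hm)
    _ = ∫⁻ y in {y : Adm A | ∀ i < 1, y.1 i = p.1 (i + (m - 1))},
          ENNReal.ofReal (1 / φ y) ∂μ := hconf _ hScyl hinj
    _ ≤ ∫⁻ y in {y : Adm A | ∀ i < m, y.1 i = p.1 i},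
          ENNReal.ofReal (1 / φ (θ^[m - 1] y)) * ∏ j ∈ Finset.range (m - 1),
            ENNReal.ofReal (1 / φ (θ^[j] y)) ∂μ := by
        have h1 : m - (m - 1) = 1 := by omega
        have := ind_lemma μ φ θ hθ hconf p m (m - 1) (by omega)
          (fun y => ENNReal.ofReal (1 / φ y))
        rw [h1] at this
        exact this
    _ = ∫⁻ y in {y : Adm A | ∀ i < m, y.1 i = p.1 i},
          ∏ j ∈ Finset.range m, ENNReal.ofReal (1 / φ (θ^[j] y)) ∂μ := by
        congr 1
        funext y
        have hm1 : m = (m - 1) + 1 := by omega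
        calc ENNReal.ofReal (1 / φ (θ^[m - 1] y))
              * ∏ j ∈ Finset.range (m - 1), ENNReal.ofReal (1 / φ (θ^[j] y))
            = (∏ j ∈ Finset.range (m - 1), ENNReal.ofReal (1 / φ (θ^[j] y)))
              * ENNReal.ofReal (1 / φ (θ^[m - 1] y)) := mul_comm _ _
          _ = ∏ j ∈ Finset.range ((m - 1) + 1), ENNReal.ofReal (1 / φ (θ^[j] y)) :=
              (Finset.prod_range_succ _ _).symm
          _ = ∏ j ∈ Finset.range m, ENNReal.ofReal (1 / φ (θ^[j] y)) := by rw [← hm1]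
    _ ≤ ∫⁻ y in {y : Adm A | ∀ i < m, y.1 i = p.1 i},
          ENNReal.ofReal (C m / ∏ k ∈ Finset.range m, φ (θ^[k] p)) ∂μ := by
        rw [← lintegral_indicator (meas_cyl m (fun i => p.1 i)),
          ← lintegral_indicator (meas_cyl m (fun i => p.1 i))]
        refine lintegral_mono fun y => ?_
        by_cases hy : y ∈ {y : Adm A | ∀ i < m, y.1 i = p.1 i}
        · rw [Set.indicator_of_mem hy, Set.indicator_of_mem hy]
          have hPy : 0 < ∏ k ∈ Finset.range m, φ (θ^[k] y) :=
            Finset.prod_pos fun k _ => hφpos _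
          have hvar := hCvar m p y (fun i hi => (hy i hi).symm)
          rw [← ENNReal.ofReal_prod_of_nonneg
            (fun j _ => le_of_lt (one_div_pos.mpr (hφpos _)))]
          apply ENNReal.ofReal_le_ofReal
          have hprod : ∏ j ∈ Finset.range m, (1 / φ (θ^[j] y))
              = 1 / ∏ k ∈ Finset.range m, φ (θ^[k] y) := by
            rw [one_div, ← Finset.prod_inv_distrib]
            simp [one_div]
          rw [hprod, div_le_div_iff₀ hPy hPp]
          nlinarith
        · rw [Set.indicator_of_notMem hy, Set.indicator_of_notMem hy]
    _ = ENNReal.ofReal (C m / ∏ k ∈ Finset.range m, φ (θ^[k] p))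
          * μ {y : Adm A | ∀ i < m, y.1 i = p.1 i} := setLIntegral_const _ _

end KeyMain

section Per
set_option linter.unusedSectionVars false
variable {I : Type*} [Countable I] [MeasurableSpace I] [MeasurableSingletonClass I]
  {A : I → I → Prop}

lemma periodic_eq (θ : Adm A → Adm A) (hθ : ∀ x n, (θ x).1 n = x.1 (n + 1))
    (n : ℕ) (hn : 1 ≤ n) (x y : Adm A) (hx : θ^[n] x = x) (hy : θ^[n] y = y)
    (h : ∀ i < n, x.1 i = y.1 i) : x = y := by
  have hxp : ∀ j, x.1 (j + n) = x.1 j := fun j => by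
    conv_rhs => rw [← hx]
    rw [iter_coord θ hθ n x j]
  have hyp : ∀ j, y.1 (j + n) = y.1 j := fun j => by
    conv_rhs => rw [← hy]
    rw [iter_coord θ hθ n y j]
  have hall : ∀ i, x.1 i = y.1 i := by
    intro i
    induction i using Nat.strong_induction_on with
    | _ i ih =>
      by_cases hi : i < n
      · exact h i hi
      · have hi' : i - n + n = i := by omega
        rw [← hi', hxp, hyp, ih (i - n) (by omega)]
  exact Subtype.ext (funext hall)

end Per

/-- If a topological Markov chain carries a `φ`-conformal probability measure for a potential
`φ` of medium variation, then the Gurevič pressure is at most `0`. -/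
theorem gurevic_pressure_nonpos_of_conformal_measure
    {I : Type*} [Countable I] [MeasurableSpace I] [MeasurableSingletonClass I]
    (A : I → I → Prop)
    (φ : {x : ℕ → I // ∀ n, A (x n) (x (n + 1))} → ℝ)
    (hφpos : ∀ x, 0 < φ x)
    (θ : {x : ℕ → I // ∀ n, A (x n) (x (n + 1))} →
         {x : ℕ → I // ∀ n, A (x n) (x (n + 1))})
    (hθ : ∀ x n, (θ x).1 n = x.1 (n + 1))
    -- topologically mixing
    (hmix : ∀ a b : I, ∃ N : ℕ, ∀ n ≥ N,
      ∃ x : {x : ℕ → I // ∀ n, A (x n) (x (n + 1))}, x.1 0 = a ∧ x.1 n = b)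
    (μ : Measure {x : ℕ → I // ∀ n, A (x n) (x (n + 1))}) [IsProbabilityMeasure μ]
    (hconf : ∀ S : Set {x : ℕ → I // ∀ n, A (x n) (x (n + 1))},
      MeasurableSet S → Set.InjOn θ S →
      μ (θ '' S) = ∫⁻ x in S, ENNReal.ofReal (1 / φ x) ∂μ)
    (C : ℕ → ℝ) (hC1 : ∀ n, 1 ≤ C n)
    (hCvar : ∀ n : ℕ, ∀ x y : {x : ℕ → I // ∀ n, A (x n) (x (n + 1))},
      (∀ i < n, x.1 i = y.1 i) →
      (∏ k ∈ Finset.range n, φ (θ^[k] x)) ≤ C n * ∏ k ∈ Finset.range n, φ (θ^[k] y))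
    (hClim : Tendsto (fun n => (C n) ^ (1 / (n : ℝ))) atTop (nhds 1)) :
    ∀ a : I,
      atTop.limsup (fun n : ℕ => (1 / (n : ℝ)) * Real.log
        (∑' x : {x : {x : ℕ → I // ∀ n, A (x n) (x (n + 1))} // θ^[n] x = x ∧ x.1 0 = a},
          ∏ k ∈ Finset.range n, φ (θ^[k] x.1))) ≤ 0 := by
  intro a
  classical
  -- the cylinder over the state `a`
  set Ba : Set (Adm A) := {z : Adm A | z.1 0 = a} with hBa_def
  have hBa_meas : MeasurableSet Ba :=
    (meas_coord 0) (measurableSet_singleton a)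
  -- positivity of `μ Ba`
  have hBa_pos : 0 < μ Ba := by
    rcases eq_or_lt_of_le ((zero_le : 0 ≤ μ Ba)) with h0 | h0
    swap
    · exact h0
    exfalso
    -- find a state of positive measure
    have hb : ∃ b : I, 0 < μ {z : Adm A | z.1 0 = b} := by
      by_contra hno
      push_neg at hno
      have hz : ∀ b : I, μ {z : Adm A | z.1 0 = b} = 0 := fun b =>
        le_antisymm (hno b) zero_le
      have huniv : (Set.univ : Set (Adm A)) = ⋃ b : I, {z : Adm A | z.1 0 = b} := by
        ext z; simp
      have : μ Set.univ = 0 := by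
        rw [huniv]
        exact measure_iUnion_null fun b => hz b
      simp [measure_univ] at this
    obtain ⟨b, hbpos⟩ := hb
    obtain ⟨N, hN⟩ := hmix a b
    obtain ⟨p, hp0, hpm⟩ := hN (N + 1) (Nat.le_succ N)
    have hkey := key_lemma μ φ hφpos θ hθ hconf C hCvar p (N + 1) (by omega)
    rw [hpm] at hkey
    have hsub : {y : Adm A | ∀ i < N + 1, y.1 i = p.1 i} ⊆ Ba := by
      intro y hy
      have := hy 0 (by omega)
      simp only [hBa_def, Set.mem_setOf_eq]
      rw [this, hp0]
    have : μ {z : Adm A | z.1 0 = b} = 0 := by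
      refine le_antisymm ?_ zero_le
      calc μ {z : Adm A | z.1 0 = b}
          ≤ ENNReal.ofReal (C (N + 1) / ∏ k ∈ Finset.range (N + 1), φ (θ^[k] p))
              * μ {y : Adm A | ∀ i < N + 1, y.1 i = p.1 i} := hkey
        _ ≤ ENNReal.ofReal (C (N + 1) / ∏ k ∈ Finset.range (N + 1), φ (θ^[k] p))
              * μ Ba := mul_le_mul_right (measure_mono hsub) _
        _ = 0 := by rw [← h0, mul_zero]
    rw [this] at hbpos
    exact lt_irrefl _ hbpos
  -- the total mass of periodic orbits
  set r : ℝ := (μ Ba).toReal with hr_def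
  have hBa_ne_top : μ Ba ≠ ⊤ := measure_ne_top μ Ba
  have hr : 0 < r := ENNReal.toReal_pos (ne_of_gt hBa_pos) hBa_ne_top
  have hr1 : r ≤ 1 := by
    rw [hr_def]
    exact ENNReal.toReal_le_of_le_ofReal zero_le_one (by simpa using prob_le_one (μ := μ) (s := Ba))
  -- the finite-sum bound
  have hsum_le : ∀ n : ℕ, 1 ≤ n →
      ∀ F : Finset {x : Adm A // θ^[n] x = x ∧ x.1 0 = a},
        ∑ x ∈ F, (∏ k ∈ Finset.range n, φ (θ^[k] x.1)) ≤ C n / r := by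
    intro n hn F
    set t : {x : Adm A // θ^[n] x = x ∧ x.1 0 = a} → ℝ :=
      fun x => ∏ k ∈ Finset.range n, φ (θ^[k] x.1) with ht_def
    have htpos : ∀ x, 0 < t x := fun x => Finset.prod_pos fun k _ => hφpos _
    set cyl : {x : Adm A // θ^[n] x = x ∧ x.1 0 = a} → Set (Adm A) :=
      fun x => {y : Adm A | ∀ i < n, y.1 i = x.1.1 i} with hcyl_def
    -- per-point bound
    have hpoint : ∀ x, ENNReal.ofReal (t x) * μ Ba ≤ ENNReal.ofReal (C n) * μ (cyl x) := by
      intro x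
      have hxa : x.1.1 n = a := by
        have h1 : (θ^[n] x.1).1 0 = x.1.1 (0 + n) := iter_coord θ hθ n x.1 0
        rw [x.2.1] at h1
        simpa using h1.symm.trans x.2.2
      have hkey := key_lemma μ φ hφpos θ hθ hconf C hCvar x.1 n hn
      rw [hxa] at hkey
      calc ENNReal.ofReal (t x) * μ Ba
          ≤ ENNReal.ofReal (t x) *
              (ENNReal.ofReal (C n / t x) * μ (cyl x)) := mul_le_mul_right hkey _
        _ = ENNReal.ofReal (t x * (C n / t x)) * μ (cyl x) := by
            rw [← mul_assoc, ← ENNReal.ofReal_mul (htpos x).le]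
        _ = ENNReal.ofReal (C n) * μ (cyl x) := by
            rw [show t x * (C n / t x) = C n from by
              rw [mul_div_assoc', mul_comm, mul_div_assoc,
                div_self (ne_of_gt (htpos x)), mul_one]]
    -- disjointness of the cylinders
    have hdisj : (↑F : Set {x : Adm A // θ^[n] x = x ∧ x.1 0 = a}).PairwiseDisjoint cyl := by
      intro x _ y _ hxy
      refine Set.disjoint_left.mpr fun z hzx hzy => hxy ?_
      refine Subtype.ext (periodic_eq θ hθ n hn x.1 y.1 x.2.1 y.2.1 fun i hi => ?_)
      rw [← hzx i hi, ← hzy i hi]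
    have hUb : μ (⋃ x ∈ F, cyl x) ≤ 1 := prob_le_one
    have hEN : ENNReal.ofReal ((∑ x ∈ F, t x) * r) ≤ ENNReal.ofReal (C n) := by
      calc ENNReal.ofReal ((∑ x ∈ F, t x) * r)
          = ENNReal.ofReal (∑ x ∈ F, t x) * ENNReal.ofReal r :=
            ENNReal.ofReal_mul (Finset.sum_nonneg fun x _ => (htpos x).le)
        _ = ENNReal.ofReal (∑ x ∈ F, t x) * μ Ba := by
            rw [hr_def, ENNReal.ofReal_toReal hBa_ne_top]
        _ = ∑ x ∈ F, ENNReal.ofReal (t x) * μ Ba := by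
            rw [ENNReal.ofReal_sum_of_nonneg fun x _ => (htpos x).le, Finset.sum_mul]
        _ ≤ ∑ x ∈ F, ENNReal.ofReal (C n) * μ (cyl x) :=
            Finset.sum_le_sum fun x _ => hpoint x
        _ = ENNReal.ofReal (C n) * μ (⋃ x ∈ F, cyl x) := by
            rw [← Finset.mul_sum,
              measure_biUnion_finset hdisj fun x _ => meas_cyl n fun i => x.1.1 i]
        _ ≤ ENNReal.ofReal (C n) * 1 := mul_le_mul_right hUb _
        _ = ENNReal.ofReal (C n) := mul_one _
    have hsum : (∑ x ∈ F, t x) * r ≤ C n :=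
      (ENNReal.ofReal_le_ofReal_iff (by linarith [hC1 n])).mp hEN
    rw [le_div_iff₀ hr]
    exact hsum
  -- the tsum bound
  have hZ : ∀ n : ℕ, 1 ≤ n →
      (∑' x : {x : Adm A // θ^[n] x = x ∧ x.1 0 = a},
        ∏ k ∈ Finset.range n, φ (θ^[k] x.1)) ≤ C n / r := by
    intro n hn
    have hnonneg : (0 : {x : Adm A // θ^[n] x = x ∧ x.1 0 = a} → ℝ) ≤
        fun x => ∏ k ∈ Finset.range n, φ (θ^[k] x.1) :=
      fun x => (Finset.prod_pos fun k _ => hφpos _).le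
    have hsummable : Summable (fun x : {x : Adm A // θ^[n] x = x ∧ x.1 0 = a} =>
        ∏ k ∈ Finset.range n, φ (θ^[k] x.1)) :=
      summable_of_sum_le hnonneg (hsum_le n hn)
    exact Summable.tsum_le_of_sum_le hsummable (hsum_le n hn)
  set u : ℕ → ℝ := fun n : ℕ => (1 / (n : ℝ)) * Real.log
      (∑' x : {x : Adm A // θ^[n] x = x ∧ x.1 0 = a},
        ∏ k ∈ Finset.range n, φ (θ^[k] x.1)) with hu_def
  have hZ0 : ∀ n : ℕ, 0 ≤ (∑' x : {x : Adm A // θ^[n] x = x ∧ x.1 0 = a},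
      ∏ k ∈ Finset.range n, φ (θ^[k] x.1)) :=
    fun n => tsum_nonneg fun x => (Finset.prod_pos fun k _ => hφpos _).le
  have hCpos : ∀ n : ℕ, (0 : ℝ) < C n := fun n => lt_of_lt_of_le one_pos (hC1 n)
  -- the comparison sequence
  set G : ℕ → ℝ := fun n => (1 / (n : ℝ)) * Real.log (C n)
      + (1 / (n : ℝ)) * (- Real.log r) with hG_def
  have hG0 : Tendsto G atTop (nhds 0) := by
    have h1 : Tendsto (fun n : ℕ => (1 / (n : ℝ)) * Real.log (C n)) atTop (nhds 0) := by
      have hlog := hClim.log one_ne_zero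
      simp only [Real.log_one] at hlog
      refine hlog.congr fun n => ?_
      rw [Real.log_rpow (hCpos n)]
    have h2 : Tendsto (fun n : ℕ => (1 / (n : ℝ)) * (- Real.log r)) atTop (nhds 0) := by
      simpa using tendsto_one_div_atTop_nhds_zero_nat.mul_const (- Real.log r)
    have h3 := h1.add h2
    rw [add_zero] at h3
    exact h3
  -- eventual comparison
  have hcomp : ∀ ε : ℝ, 0 < ε → ∀ᶠ n in atTop, u n ≤ ε := by
    intro ε hε
    have hev1 : ∀ᶠ n in atTop, G n < ε := hG0.eventually_lt_const hε
    filter_upwards [hev1, eventually_ge_atTop 1] with n hGn hn1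
    have hlog : Real.log (∑' x : {x : Adm A // θ^[n] x = x ∧ x.1 0 = a},
        ∏ k ∈ Finset.range n, φ (θ^[k] x.1)) ≤ Real.log (C n / r) := by
      rcases eq_or_lt_of_le (hZ0 n) with h0 | h0
      · rw [← h0, Real.log_zero]
        refine Real.log_nonneg ?_
        rw [le_div_iff₀ hr, one_mul]
        linarith [hC1 n]
      · exact Real.log_le_log h0 (hZ n hn1)
    have hun : u n ≤ G n := by
      have hn0 : (0:ℝ) ≤ 1 / (n:ℝ) := by positivity
      calc u n ≤ (1 / (n : ℝ)) * Real.log (C n / r) :=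
            mul_le_mul_of_nonneg_left hlog hn0
        _ = G n := by
            rw [hG_def, Real.log_div (ne_of_gt (hCpos n)) (ne_of_gt hr)]
            ring
    exact hun.trans hGn.le
  -- conclusion
  show atTop.limsup u ≤ 0
  rw [Filter.limsup_eq]
  by_cases hbdd : BddBelow {c : ℝ | ∀ᶠ n in atTop, u n ≤ c}
  · by_contra hpos
    push_neg at hpos
    have hhalf : sInf {c : ℝ | ∀ᶠ n in atTop, u n ≤ c}
        ≤ sInf {c : ℝ | ∀ᶠ n in atTop, u n ≤ c} / 2 :=
      csInf_le hbdd (hcomp _ (by linarith))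
    linarith
  · rw [Real.sInf_of_not_bddBelow hbdd]
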